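/- Let P ≥ 1 be an integer, m ∈ (-1,1) and ρₒ ∈ ℝ. Define v_{ji} = m(1-m)^{P-j} - m·[j ≤ i]·(1-m)^{i-j} and u_{jk} = ρₒ(1-m)^{k-1} - (1-ρₒ)m·[k > j]·(1-m)^{k-j-1} for indices in 1,…,P, where [·] denotes the 0/1 indicator. Then for all 1 ≤ i, k ≤ P, with j_{ik} := min(k-1, i), one has Σ_{j=1}^{P} v_{ji} u_{jk} = (ρₒ - (1-ρₒ)m/(2-m))·((1-m)^{i+k-1} - (1-m)^{P+k-1}) + ((1-ρₒ)m/(2-m))·((1-m)^{i+k-1-2j_{ik}} - (1-m)^{P-(k-1)}). -/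

import Mathlib

open BigOperators

/-- `v_{ji} = m (1-m)^{P-j} - m [j ≤ i] (1-m)^{i-j}` (one-based indices). -/
noncomputable def vfun (P : ℕ) (m : ℝ) (j i : ℕ) : ℝ :=
  m * (1 - m) ^ (P - j) - m * (if j ≤ i then (1 : ℝ) else 0) * (1 - m) ^ (i - j)

/-- `u_{jk} = ρₒ (1-m)^{k-1} - (1-ρₒ) m [k > j] (1-m)^{k-j-1}` (one-based indices). -/
noncomputable def ufun (m ρo : ℝ) (j k : ℕ) : ℝ :=
  ρo * (1 - m) ^ (k - 1)
    - (1 - ρo) * m * (if j < k then (1 : ℝ) else 0) * (1 - m) ^ (k - j - 1)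

lemma sum_Icc_one_rev (n : ℕ) (f : ℕ → ℝ) :
    ∑ j ∈ Finset.Icc 1 n, f j = ∑ t ∈ Finset.range n, f (n - t) := by
  refine Finset.sum_nbij' (fun j => n - j) (fun t => n - t) ?_ ?_ ?_ ?_ ?_
  · intro a ha; simp only [Finset.mem_Icc] at ha; simp only [Finset.mem_range]; omega
  · intro a ha; simp only [Finset.mem_range] at ha; simp only [Finset.mem_Icc]; omega
  · intro a ha; simp only [Finset.mem_Icc] at ha; omega
  · intro a ha; simp only [Finset.mem_range] at ha; omega
  · intro a ha; simp only [Finset.mem_Icc] at ha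
    congr 1; omega

/-- Closed form of `Σ_{j=1}^P v_{ji} u_{jk}`, an intermediate identity in the proof of the
paper's linear-perturbation theorem. -/
theorem sum_v_mul_u
    (P : ℕ) (hP : 1 ≤ P) (m : ℝ) (hm : -1 < m) (hm' : m < 1) (ρo : ℝ) :
    ∀ i k : ℕ, 1 ≤ i → i ≤ P → 1 ≤ k → k ≤ P →
      ∑ j ∈ Finset.Icc 1 P, vfun P m j i * ufun m ρo j k =
        (ρo - (1 - ρo) * m / (2 - m)) *
            ((1 - m) ^ (i + k - 1) - (1 - m) ^ (P + k - 1))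
          + ((1 - ρo) * m / (2 - m)) *
            ((1 - m) ^ (i + k - 1 - 2 * min (k - 1) i) - (1 - m) ^ (P - (k - 1))) := by
  intro i k hi hiP hk hkP
  have h2m : (2 : ℝ) - m ≠ 0 := by linarith
  set J : ℕ := min (k - 1) i with hJdef
  have hJk : J ≤ k - 1 := min_le_left _ _
  have hJi : J ≤ i := min_le_right _ _
  -- Step 1: expand the summand into four pieces
  have hsum : ∑ j ∈ Finset.Icc 1 P, vfun P m j i * ufun m ρo j k
      = (m * ρo * (1 - m) ^ (k - 1)) * (∑ j ∈ Finset.Icc 1 P, (1 - m) ^ (P - j))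
      - (m ^ 2 * (1 - ρo)) *
          (∑ j ∈ Finset.Icc 1 P,
            (if j < k then (1 - m) ^ (P - j) * (1 - m) ^ (k - j - 1) else 0))
      - (m * ρo * (1 - m) ^ (k - 1)) *
          (∑ j ∈ Finset.Icc 1 P, (if j ≤ i then (1 - m) ^ (i - j) else 0))
      + (m ^ 2 * (1 - ρo)) *
          (∑ j ∈ Finset.Icc 1 P,
            (if j ≤ i ∧ j < k then (1 - m) ^ (i - j) * (1 - m) ^ (k - j - 1) else 0)) := by
    rw [Finset.mul_sum, Finset.mul_sum, Finset.mul_sum, Finset.mul_sum,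
      ← Finset.sum_sub_distrib, ← Finset.sum_sub_distrib, ← Finset.sum_add_distrib]
    refine Finset.sum_congr rfl fun j hj => ?_
    unfold vfun ufun
    by_cases h1 : j ≤ i <;> by_cases h2 : j < k <;>
      simp only [h1, h2, if_true, if_false, and_true, and_false, true_and, false_and,
        if_pos, ite_true, ite_false] <;> ring
  -- Step 2: evaluate the four sums
  have hA : ∑ j ∈ Finset.Icc 1 P, (1 - m) ^ (P - j)
      = ∑ t ∈ Finset.range P, (1 - m) ^ t := by
    rw [sum_Icc_one_rev]
    refine Finset.sum_congr rfl fun t ht => ?_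
    simp only [Finset.mem_range] at ht
    congr 1; omega
  have hB : ∑ j ∈ Finset.Icc 1 P, (if j ≤ i then (1 - m) ^ (i - j) else 0)
      = ∑ t ∈ Finset.range i, (1 - m) ^ t := by
    rw [← Finset.sum_subset (Finset.Icc_subset_Icc_right hiP)
      (fun x hx hx' => by
        simp only [Finset.mem_Icc] at hx hx'; rw [if_neg]; omega)]
    have e1 : ∑ j ∈ Finset.Icc 1 i, (if j ≤ i then (1 - m) ^ (i - j) else 0)
        = ∑ j ∈ Finset.Icc 1 i, (1 - m) ^ (i - j) := by
      refine Finset.sum_congr rfl fun x hx => ?_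
      simp only [Finset.mem_Icc] at hx
      rw [if_pos hx.2]
    rw [e1, sum_Icc_one_rev i (fun j => (1 - m) ^ (i - j))]
    refine Finset.sum_congr rfl fun t ht => ?_
    simp only [Finset.mem_range] at ht
    show (1 - m) ^ (i - (i - t)) = (1 - m) ^ t
    congr 1; omega
  have hC : ∑ j ∈ Finset.Icc 1 P,
      (if j < k then (1 - m) ^ (P - j) * (1 - m) ^ (k - j - 1) else 0)
      = (1 - m) ^ (P + 1 - k) * ∑ t ∈ Finset.range (k - 1), ((1 - m) ^ 2) ^ t := by
    rw [← Finset.sum_subset (Finset.Icc_subset_Icc_right (by omega : k - 1 ≤ P))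
      (fun x hx hx' => by
        simp only [Finset.mem_Icc] at hx hx'; rw [if_neg]; omega)]
    have e1 : ∑ j ∈ Finset.Icc 1 (k - 1),
        (if j < k then (1 - m) ^ (P - j) * (1 - m) ^ (k - j - 1) else 0)
        = ∑ j ∈ Finset.Icc 1 (k - 1), (1 - m) ^ (P - j) * (1 - m) ^ (k - j - 1) := by
      refine Finset.sum_congr rfl fun x hx => ?_
      simp only [Finset.mem_Icc] at hx
      rw [if_pos (by omega)]
    rw [e1, sum_Icc_one_rev (k - 1) (fun j => (1 - m) ^ (P - j) * (1 - m) ^ (k - j - 1)),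
      Finset.mul_sum]
    refine Finset.sum_congr rfl fun t ht => ?_
    simp only [Finset.mem_range] at ht
    show (1 - m) ^ (P - (k - 1 - t)) * (1 - m) ^ (k - (k - 1 - t) - 1) = _
    rw [← pow_add, ← pow_mul, ← pow_add]
    congr 1; omega
  have hD : ∑ j ∈ Finset.Icc 1 P,
      (if j ≤ i ∧ j < k then (1 - m) ^ (i - j) * (1 - m) ^ (k - j - 1) else 0)
      = (1 - m) ^ (i + k - 1 - 2 * J) * ∑ t ∈ Finset.range J, ((1 - m) ^ 2) ^ t := by
    rw [← Finset.sum_subset (Finset.Icc_subset_Icc_right (by omega : J ≤ P))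
      (fun x hx hx' => by
        simp only [Finset.mem_Icc] at hx hx'; rw [if_neg]; omega)]
    have e1 : ∑ j ∈ Finset.Icc 1 J,
        (if j ≤ i ∧ j < k then (1 - m) ^ (i - j) * (1 - m) ^ (k - j - 1) else 0)
        = ∑ j ∈ Finset.Icc 1 J, (1 - m) ^ (i - j) * (1 - m) ^ (k - j - 1) := by
      refine Finset.sum_congr rfl fun x hx => ?_
      simp only [Finset.mem_Icc] at hx
      rw [if_pos (by omega)]
    rw [e1, sum_Icc_one_rev J (fun j => (1 - m) ^ (i - j) * (1 - m) ^ (k - j - 1)),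
      Finset.mul_sum]
    refine Finset.sum_congr rfl fun t ht => ?_
    simp only [Finset.mem_range] at ht
    show (1 - m) ^ (i - (J - t)) * (1 - m) ^ (k - (J - t) - 1) = _
    rw [← pow_add, ← pow_mul, ← pow_add]
    congr 1; omega
  -- Step 3: geometric sum facts
  have g1 : m * (∑ t ∈ Finset.range P, (1 - m) ^ t) = 1 - (1 - m) ^ P := by
    linear_combination -(geom_sum_mul (1 - m) P)
  have g2 : m * (∑ t ∈ Finset.range i, (1 - m) ^ t) = 1 - (1 - m) ^ i := by
    linear_combination -(geom_sum_mul (1 - m) i)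
  have g3k : (m * (2 - m)) * (∑ t ∈ Finset.range (k - 1), ((1 - m) ^ 2) ^ t)
      = 1 - ((1 - m) ^ 2) ^ (k - 1) := by
    linear_combination -(geom_sum_mul ((1 - m) ^ 2) (k - 1))
  have g3J : (m * (2 - m)) * (∑ t ∈ Finset.range J, ((1 - m) ^ 2) ^ t)
      = 1 - ((1 - m) ^ 2) ^ J := by
    linear_combination -(geom_sum_mul ((1 - m) ^ 2) J)
  -- power relations
  have p1 : (1 - m) ^ (i + k - 1) = (1 - m) ^ (k - 1) * (1 - m) ^ i := by
    rw [← pow_add]; congr 1; omega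
  have p2 : (1 - m) ^ (P + k - 1) = (1 - m) ^ (k - 1) * (1 - m) ^ P := by
    rw [← pow_add]; congr 1; omega
  have p3 : (1 - m) ^ (P - (k - 1)) = (1 - m) ^ (P + 1 - k) := by
    congr 1; omega
  have p4 : (1 - m) ^ (P + 1 - k) * ((1 - m) ^ 2) ^ (k - 1)
      = (1 - m) ^ (k - 1) * (1 - m) ^ P := by
    rw [← pow_mul, ← pow_add, ← pow_add]; congr 1; omega
  have p5 : (1 - m) ^ (i + k - 1 - 2 * J) * ((1 - m) ^ 2) ^ J
      = (1 - m) ^ (k - 1) * (1 - m) ^ i := by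
    rw [← pow_mul, ← pow_add, ← pow_add]; congr 1; omega
  rw [hsum, hA, hB, hC, hD, p1, p2, p3]
  set GP := ∑ t ∈ Finset.range P, (1 - m) ^ t
  set Gi := ∑ t ∈ Finset.range i, (1 - m) ^ t
  set HK := ∑ t ∈ Finset.range (k - 1), ((1 - m) ^ 2) ^ t
  set HJ := ∑ t ∈ Finset.range J, ((1 - m) ^ 2) ^ t
  field_simp
  linear_combination ((2 - m) * ρo * (1 - m) ^ (k - 1)) * g1
    - ((2 - m) * ρo * (1 - m) ^ (k - 1)) * g2
    - ((1 - ρo) * m * (1 - m) ^ (P + 1 - k)) * g3k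
    + ((1 - ρo) * m * (1 - m) ^ (i + k - 1 - 2 * J)) * g3J
    + ((1 - ρo) * m) * p4 - ((1 - ρo) * m) * p5
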